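/- arXiv:2005.06789 — 2 statements merged into one kernel-verified Lean document; each statement's English description precedes it below -/
import Mathlib

section
/- (Helly-type convergence) Let (Y^n)_{n≥0} and (K^n)_{n≥0} be sequences of continuous functions on [0,T] with each K^n nondecreasing, K^n(0)=0, converging uniformly on [0,T] to continuous functions Y and K respectively (K nondecreasing). Let L : [0,T] → ℝ be continuous with Y^n ≥ L and ∫_0^T (Y^n(s) − L(s)) dK^n(s) = 0 for all n. Then Y ≥ L and ∫_0^T (Y(s) − L(s)) dK(s) = 0. -/
open MeasureTheory Set Filter Topology

private lemma myLeftLim_eq {g : ℝ → ℝ} (hg : Continuous g) (a : ℝ) :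
    Function.leftLim g a = g a :=
by
  apply leftLim_eq_of_tendsto
  · exact (hg.tendsto a).mono_left nhdsWithin_le_nhds

private lemma mySingleton_null (G : StieltjesFunction ℝ) (hGc : Continuous G) (a : ℝ) :
    G.measure {a} = 0 := by
  rw [G.measure_singleton, myLeftLim_eq hGc, sub_self, ENNReal.ofReal_zero]

private lemma myIntegral_Ioc_sum (μ : Measure ℝ) [IsLocallyFiniteMeasure μ] {f : ℝ → ℝ}
    (hf : Continuous f) {t : ℕ → ℝ} (ht : Monotone t) (m : ℕ) :
    ∫ x in Ioc (t 0) (t m), f x ∂μ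
      = ∑ j ∈ Finset.range m, ∫ x in Ioc (t j) (t (j+1)), f x ∂μ := by
  induction m with
  | zero => simp
  | succ m ih =>
    rw [Finset.sum_range_succ, ← ih,
      ← Set.Ioc_union_Ioc_eq_Ioc (ht (Nat.zero_le m)) (ht (Nat.le_succ m)),
      setIntegral_union (Set.Ioc_disjoint_Ioc_of_le le_rfl) measurableSet_Ioc
        hf.integrableOn_Ioc hf.integrableOn_Ioc]

/-- Riemann–Stieltjes sum approximation of a Stieltjes integral. -/
private lemma myHelly_approx {f : ℝ → ℝ} (hf : Continuous f) (G : StieltjesFunction ℝ)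
    (hGc : Continuous G) {T : ℝ} (hT : 0 ≤ T) {t : ℕ → ℝ} (ht : Monotone t)
    (ht0 : t 0 = 0) {m : ℕ} (htm : t m = T) {ε : ℝ} (hε : 0 ≤ ε)
    (hosc : ∀ j < m, ∀ x ∈ Set.Ioc (t j) (t (j+1)), |f x - f (t j)| ≤ ε) :
    |(∫ x in Icc 0 T, f x ∂G.measure)
      - ∑ j ∈ Finset.range m, f (t j) * (G (t (j+1)) - G (t j))| ≤ ε * (G T - G 0) := by
  have hIcc : (∫ x in Icc 0 T, f x ∂G.measure) = ∫ x in Ioc 0 T, f x ∂G.measure := by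
    refine setIntegral_congr_set (ae_eq_set.2 ⟨?_, ?_⟩)
    · refine measure_mono_null (fun x hx => ?_) (mySingleton_null G hGc 0)
      rcases hx with ⟨⟨h1, h2⟩, h3⟩
      simp only [mem_Ioc, not_and, not_le] at h3
      have : ¬ (0 < x) := fun h => absurd (h3 h) (not_lt.2 h2)
      exact le_antisymm (not_lt.1 this) h1 ▸ rfl
    · rw [Set.diff_eq_empty.2 Set.Ioc_subset_Icc_self]; exact measure_empty
  rw [hIcc, ← ht0, ← htm, myIntegral_Ioc_sum G.measure hf ht m, ← Finset.sum_sub_distrib]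
  calc |∑ j ∈ Finset.range m,
      ((∫ x in Ioc (t j) (t (j+1)), f x ∂G.measure) - f (t j) * (G (t (j+1)) - G (t j)))|
      ≤ ∑ j ∈ Finset.range m,
        |(∫ x in Ioc (t j) (t (j+1)), f x ∂G.measure) - f (t j) * (G (t (j+1)) - G (t j))| :=
      Finset.abs_sum_le_sum_abs _ _
    _ ≤ ∑ j ∈ Finset.range m, ε * (G (t (j+1)) - G (t j)) := by
      refine Finset.sum_le_sum fun j hj => ?_
      have hμ : G.measure (Ioc (t j) (t (j+1))) = ENNReal.ofReal (G (t (j+1)) - G (t j)) :=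
        G.measure_Ioc _ _
      have hμt : (G.measure (Ioc (t j) (t (j+1)))).toReal = G (t (j+1)) - G (t j) := by
        rw [hμ, ENNReal.toReal_ofReal (sub_nonneg.2 (G.mono (ht (Nat.le_succ j))))]
      have hconst : f (t j) * (G (t (j+1)) - G (t j))
          = ∫ _ in Ioc (t j) (t (j+1)), f (t j) ∂G.measure := by
        rw [setIntegral_const, measureReal_def, hμt, smul_eq_mul, mul_comm]
      rw [hconst, ← integral_sub hf.integrableOn_Ioc (integrableOn_const (by
        rw [hμ]; exact ENNReal.ofReal_lt_top.ne))]
      have := norm_setIntegral_le_of_norm_le_const (μ := G.measure)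
        (s := Ioc (t j) (t (j+1))) (f := fun x => f x - f (t j)) (C := ε)
        (by rw [hμ]; exact ENNReal.ofReal_lt_top)
        (fun x hx => by rw [Real.norm_eq_abs]; exact hosc j (Finset.mem_range.1 hj) x hx)
      rw [Real.norm_eq_abs, measureReal_def, hμt] at this
      exact this
    _ = ε * (G (t m) - G (t 0)) := by
      rw [← Finset.mul_sum, Finset.sum_range_sub (fun j => G (t j))]

/-- Helly convergence for a fixed continuous integrand. -/
private lemma myHelly_tendsto {T : ℝ} (hT : 0 ≤ T) {f : ℝ → ℝ} (hf : Continuous f)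
    (G : ℕ → StieltjesFunction ℝ) (hGc : ∀ n, Continuous (G n : ℝ → ℝ))
    (Glim : StieltjesFunction ℝ) (hGlimc : Continuous (Glim : ℝ → ℝ))
    (hGu : ∀ x ∈ Icc 0 T, Tendsto (fun n => (G n) x) atTop (𝓝 (Glim x))) :
    Tendsto (fun n => ∫ x in Icc 0 T, f x ∂(G n).measure) atTop
      (𝓝 (∫ x in Icc 0 T, f x ∂Glim.measure)) := by
  rw [Metric.tendsto_atTop]
  intro ε hε
  set D : ℝ := Glim T - Glim 0 with hD
  have hD0 : 0 ≤ D := sub_nonneg.2 (Glim.mono hT)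
  have hden : 0 < 2 * D + 3 := by linarith
  set ε₁ : ℝ := ε / (2 * D + 3) with hε₁def
  have hε₁ : 0 < ε₁ := div_pos hε hden
  -- uniform continuity of f on [0,T]
  obtain ⟨δ, hδ, hδf⟩ := Metric.uniformContinuousOn_iff.1
    (isCompact_Icc.uniformContinuousOn_of_continuous (hf.continuousOn (s := Icc 0 T))) ε₁ hε₁
  -- choose partition size
  obtain ⟨m₀, hm₀⟩ := exists_nat_gt (T / δ)
  set m : ℕ := m₀ + 1 with hmdef
  have hmpos : (0:ℝ) < m := by positivity
  have hTm : T / m < δ := by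
    rw [div_lt_iff₀ hmpos]
    have : T / δ < m := lt_of_lt_of_le hm₀ (by exact_mod_cast Nat.le_succ m₀)
    calc T = (T / δ) * δ := by field_simp
      _ < m * δ := by exact mul_lt_mul_of_pos_right this hδ
      _ = δ * m := mul_comm _ _
  set t : ℕ → ℝ := fun j => (j : ℝ) * T / m with htdef
  have ht : Monotone t := by
    intro a b hab
    have h : (a:ℝ) ≤ b := by exact_mod_cast hab
    simp only [htdef]
    gcongr
  have ht0 : t 0 = 0 := by simp [htdef]
  have htm : t m = T := by simp only [htdef]; exact mul_div_cancel_left₀ T hmpos.ne'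
  have htmem : ∀ j ≤ m, t j ∈ Icc 0 T := by
    intro j hj
    constructor
    · have : (0:ℝ) ≤ (j:ℝ) * T := mul_nonneg (Nat.cast_nonneg j) hT
      exact div_nonneg this hmpos.le
    · rw [← htm]; exact ht hj
  have htdiff : ∀ j : ℕ, t (j+1) - t j = T / m := by
    intro j
    simp only [htdef]
    push_cast
    ring
  have hosc : ∀ j < m, ∀ x ∈ Set.Ioc (t j) (t (j+1)), |f x - f (t j)| ≤ ε₁ := by
    intro j hj x hx
    have hjm : t j ∈ Icc 0 T := htmem j hj.le
    have hj1m : t (j+1) ∈ Icc 0 T := htmem (j+1) hj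
    have hxm : x ∈ Icc 0 T := ⟨le_trans hjm.1 hx.1.le, le_trans hx.2 hj1m.2⟩
    have hdist : dist x (t j) < δ := by
      rw [Real.dist_eq, abs_of_pos (sub_pos.2 hx.1)]
      calc x - t j ≤ t (j+1) - t j := by linarith [hx.2]
        _ = T / m := htdiff j
        _ < δ := hTm
    have := hδf x hxm (t j) hjm hdist
    rw [Real.dist_eq] at this
    exact this.le
  -- Riemann sums
  set S : StieltjesFunction ℝ → ℝ :=
    fun G' => ∑ j ∈ Finset.range m, f (t j) * (G' (t (j+1)) - G' (t j)) with hSdef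
  have happrox : ∀ (G' : StieltjesFunction ℝ), Continuous (G' : ℝ → ℝ) →
      |(∫ x in Icc 0 T, f x ∂G'.measure) - S G'| ≤ ε₁ * (G' T - G' 0) :=
    fun G' hG'c => myHelly_approx hf G' hG'c hT ht ht0 htm hε₁.le hosc
  -- S (G n) → S Glim
  have hS : Tendsto (fun n => S (G n)) atTop (𝓝 (S Glim)) := by
    refine tendsto_finset_sum _ fun j hj => ?_
    have hjm := Finset.mem_range.1 hj
    exact (Tendsto.sub (hGu _ (htmem (j+1) hjm)) (hGu _ (htmem j hjm.le))).const_mul _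
  have hGT : Tendsto (fun n => (G n) T - (G n) 0) atTop (𝓝 D) :=
    (hGu T (right_mem_Icc.2 hT)).sub (hGu 0 (left_mem_Icc.2 hT))
  have hev : ∀ᶠ n in atTop, |S (G n) - S Glim| < ε₁ ∧ (G n) T - (G n) 0 < D + 1 := by
    filter_upwards [eventually_atTop.2 (Metric.tendsto_atTop.1 hS ε₁ hε₁),
      eventually_atTop.2 (Metric.tendsto_atTop.1 hGT 1 one_pos)] with n h1 h2
    rw [Real.dist_eq] at h1 h2
    exact ⟨h1, by linarith [abs_lt.1 h2]⟩
  obtain ⟨N, hN⟩ := eventually_atTop.1 hev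
  refine ⟨N, fun n hn => ?_⟩
  obtain ⟨h1, h2⟩ := hN n hn
  have ha := happrox (G n) (hGc n)
  have hb := happrox Glim hGlimc
  rw [Real.dist_eq]
  have hGn0 : 0 ≤ (G n) T - (G n) 0 := sub_nonneg.2 ((G n).mono hT)
  calc |(∫ x in Icc 0 T, f x ∂(G n).measure) - ∫ x in Icc 0 T, f x ∂Glim.measure|
      ≤ |(∫ x in Icc 0 T, f x ∂(G n).measure) - S (G n)| + |S (G n) - S Glim|
        + |S Glim - ∫ x in Icc 0 T, f x ∂Glim.measure| := by
        have := abs_sub_le ((∫ x in Icc 0 T, f x ∂(G n).measure)) (S (G n))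
          (∫ x in Icc 0 T, f x ∂Glim.measure)
        have h4 := abs_sub_le (S (G n)) (S Glim) (∫ x in Icc 0 T, f x ∂Glim.measure)
        linarith
    _ ≤ ε₁ * ((G n) T - (G n) 0) + ε₁ + ε₁ * D := by
        rw [abs_sub_comm (S Glim)] at *
        have := happrox Glim hGlimc
        nlinarith [ha, h1, this]
    _ ≤ ε₁ * (D + 1) + ε₁ + ε₁ * D := by nlinarith
    _ < ε := by
        have heq : ε₁ * (D + 1) + ε₁ + ε₁ * D = ε₁ * (2*D + 2) := by ring
        rw [heq, hε₁def, div_mul_eq_mul_div, div_lt_iff₀ hden]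
        nlinarith [hε, hD0]

/-- Helly-type convergence: if continuous `Y^n` and continuous
nondecreasing `K^n` (with `K^n(0)=0`) converge uniformly on `[0,T]` to `Y` and `K`,
`Y^n ≥ L` on `[0,T]` and `∫_0^T (Y^n − L) dK^n = 0` for all `n`, then `Y ≥ L` on `[0,T]`
and `∫_0^T (Y − L) dK = 0`, the integrals being Lebesgue–Stieltjes integrals. -/
theorem stmt_10 (T : ℝ) (hT : 0 < T)
    (Y : ℕ → ℝ → ℝ) (K : ℕ → StieltjesFunction ℝ)
    (Ylim : ℝ → ℝ) (Klim : StieltjesFunction ℝ) (L : ℝ → ℝ)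
    (hYc : ∀ n, Continuous (Y n)) (hKc : ∀ n, Continuous (K n : ℝ → ℝ))
    (hK0 : ∀ n, (K n) 0 = 0)
    (hYlimc : Continuous Ylim) (hKlimc : Continuous (Klim : ℝ → ℝ))
    (hLc : Continuous L)
    (hYu : TendstoUniformlyOn Y Ylim Filter.atTop (Set.Icc 0 T))
    (hKu : TendstoUniformlyOn (fun n => (K n : ℝ → ℝ)) (Klim : ℝ → ℝ)
      Filter.atTop (Set.Icc 0 T))
    (hge : ∀ n, ∀ s ∈ Set.Icc (0 : ℝ) T, L s ≤ Y n s)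
    (hint : ∀ n, ∫ s in Set.Icc (0 : ℝ) T, (Y n s - L s) ∂(K n).measure = 0) :
    (∀ s ∈ Set.Icc (0 : ℝ) T, L s ≤ Ylim s) ∧
    ∫ s in Set.Icc (0 : ℝ) T, (Ylim s - L s) ∂Klim.measure = 0 := by
  have hTle : (0:ℝ) ≤ T := hT.le
  have hKpt : ∀ x ∈ Icc (0:ℝ) T, Tendsto (fun n => (K n) x) atTop (𝓝 (Klim x)) :=
    fun x hx => hKu.tendsto_at hx
  have hYpt : ∀ x ∈ Icc (0:ℝ) T, Tendsto (fun n => Y n x) atTop (𝓝 (Ylim x)) :=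
    fun x hx => hYu.tendsto_at hx
  have part1 : ∀ s ∈ Set.Icc (0 : ℝ) T, L s ≤ Ylim s := by
    intro s hs
    exact ge_of_tendsto (hYpt s hs) (Eventually.of_forall fun n => hge n s hs)
  refine ⟨part1, ?_⟩
  set f : ℝ → ℝ := fun s => Ylim s - L s with hfdef
  have hfc : Continuous f := hYlimc.sub hLc
  -- Helly convergence
  have htendsto : Tendsto (fun n => ∫ x in Icc (0:ℝ) T, f x ∂(K n).measure) atTop
      (𝓝 (∫ x in Icc (0:ℝ) T, f x ∂Klim.measure)) :=
    myHelly_tendsto hTle hfc K hKc Klim hKlimc hKpt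
  -- nonnegativity
  have hnonneg : 0 ≤ ∫ x in Icc (0:ℝ) T, f x ∂Klim.measure := by
    refine setIntegral_nonneg measurableSet_Icc fun x hx => ?_
    exact sub_nonneg.2 (part1 x hx)
  -- Klim T ≥ 0
  have hKlimT : 0 ≤ Klim T := by
    refine ge_of_tendsto (hKpt T (right_mem_Icc.2 hTle)) (Eventually.of_forall fun n => ?_)
    rw [← hK0 n]; exact (K n).mono hTle
  have hB : (0:ℝ) < Klim T + 1 := by linarith
  -- measure of Icc under K n
  have hμIcc : ∀ n, ((K n).measure (Icc (0:ℝ) T)).toReal = (K n) T := by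
    intro n
    rw [(K n).measure_Icc, myLeftLim_eq (hKc n), hK0 n, sub_zero,
      ENNReal.toReal_ofReal (by rw [← hK0 n]; exact (K n).mono hTle)]
  -- the key bound: for all ε > 0, the limit integral is ≤ ε
  have hle : ∀ ε > (0:ℝ), (∫ x in Icc (0:ℝ) T, f x ∂Klim.measure) ≤ ε := by
    intro ε hε
    set η : ℝ := ε / (Klim T + 1) with hηdef
    have hη : 0 < η := div_pos hε hB
    have hev : ∀ᶠ n in atTop, (∫ x in Icc (0:ℝ) T, f x ∂(K n).measure) ≤ ε := by
      filter_upwards [Metric.tendstoUniformlyOn_iff.1 hYu η hη,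
        (hKpt T (right_mem_Icc.2 hTle)).eventually (gt_mem_nhds (lt_add_one (Klim T)))]
        with n h1 h2
      have hμfin : (K n).measure (Icc (0:ℝ) T) < ⊤ := by
        rw [(K n).measure_Icc]; exact ENNReal.ofReal_lt_top
      have hmono : (∫ x in Icc (0:ℝ) T, f x ∂(K n).measure)
          ≤ ∫ x in Icc (0:ℝ) T, ((Y n x - L x) + η) ∂(K n).measure := by
        refine setIntegral_mono_on hfc.integrableOn_Icc
          ((((hYc n).sub hLc).add continuous_const).integrableOn_Icc) measurableSet_Icc
          fun x hx => ?_
        have := h1 x hx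
        rw [Real.dist_eq] at this
        have := (abs_lt.1 this).2
        simp only [hfdef]
        linarith
      have hsplit : (∫ x in Icc (0:ℝ) T, ((Y n x - L x) + η) ∂(K n).measure)
          = (∫ x in Icc (0:ℝ) T, (Y n x - L x) ∂(K n).measure)
            + ∫ _ in Icc (0:ℝ) T, η ∂(K n).measure :=
        integral_add ((hYc n).sub hLc).integrableOn_Icc
          (integrableOn_const hμfin.ne)
      rw [hsplit, hint n, zero_add, setIntegral_const, smul_eq_mul, measureReal_def, hμIcc n] at hmono
      calc (∫ x in Icc (0:ℝ) T, f x ∂(K n).measure) ≤ (K n) T * η := hmono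
        _ ≤ (Klim T + 1) * η := by
          refine mul_le_mul_of_nonneg_right h2.le hη.le
        _ = ε := by rw [hηdef]; field_simp
    exact le_of_tendsto htendsto hev
  have : (∫ x in Icc (0:ℝ) T, f x ∂Klim.measure) ≤ 0 := by
    refine le_of_forall_pos_le_add fun ε hε => ?_
    simpa using hle ε hε
  exact le_antisymm this hnonneg
end

section
/- Let v be a continuous viscosity supersolution on [0,T]×ℝ^d of min[v(t,x) − h(t,x), −∂_t v − ℒv − Φ(t,x, ∇_x v σ(t,x))] = 0, v(T,·) ≥ g, where Φ satisfies the one-sided stochastic Lipschitz condition Φ(t,x,z) − Φ(t,x,z') ≥ −C(1+|x|)|z−z'|, σ is bounded by C_σ, and |v(t,x)| ≤ C(1+|x|^{2γ}). Then there exists λ₀ > 0 such that for every λ ≥ λ₀ and every θ > 0, the function v(t,x) + θ e^{−λt}(1+|x|^{2γ+2}) is again a viscosity supersolution of the same obstacle problem. -/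
noncomputable section

open Filter

/-- Euclidean state space. -/
abbrev Evs (d : ℕ) := EuclideanSpace ℝ (Fin d)

/-- `(1/2) Tr[σσᵀ D²_{xx} φ] = (1/2) ∑_i D²φ(x)[σe_i, σe_i]`: the second order operator
`ℒ` applied to a test function `φ`. -/
noncomputable def Lop (d : ℕ) (σ : ℝ → Evs d → (Evs d →L[ℝ] Evs d))
    (φ : ℝ × Evs d → ℝ) (t : ℝ) (x : Evs d) : ℝ :=
  (1 / 2) * ∑ i : Fin d,
    (fderiv ℝ (fun y =>
        (fderiv ℝ (fun y' => φ (t, y')) y) (σ t x (EuclideanSpace.single i 1))) x)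
      (σ t x (EuclideanSpace.single i 1))

/-- The vector `∇_x φ(t,·)(x) σ(t,x)`, i.e. `σ(t,x)ᵀ ∇_x φ`, fed into the Hamiltonian. -/
noncomputable def zArg (d : ℕ) (σ : ℝ → Evs d → (Evs d →L[ℝ] Evs d))
    (φ : ℝ × Evs d → ℝ) (t : ℝ) (x : Evs d) : Evs d :=
  ContinuousLinearMap.adjoint (σ t x) (gradient (fun y => φ (t, y)) x)

/-- Upper semicontinuous envelope. -/
noncomputable def uscEnv {d : ℕ} (v : ℝ × Evs d → ℝ) (p : ℝ × Evs d) : ℝ :=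
  Filter.limsup v (nhds p)

/-- Lower semicontinuous envelope. -/
noncomputable def lscEnv {d : ℕ} (v : ℝ × Evs d → ℝ) (p : ℝ × Evs d) : ℝ :=
  Filter.liminf v (nhds p)

/-- Viscosity subsolution (via `C^{1,2}` test functions and the usc envelope) of
`min[v − obst, −∂_t v − ℒv − ham(t,x,v,∇_x v σ)] = 0` on `[0,T)×ℝ^d` with terminal
condition `v(T,·) ≤ g`. -/
def IsViscositySubsol (d : ℕ) (T : ℝ) (σ : ℝ → Evs d → (Evs d →L[ℝ] Evs d))
    (obst : ℝ → Evs d → ℝ) (ham : ℝ → Evs d → ℝ → Evs d → ℝ) (g : Evs d → ℝ)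
    (v : ℝ × Evs d → ℝ) : Prop :=
  (∀ x, uscEnv v (T, x) ≤ g x) ∧
  ∀ (t : ℝ) (x : Evs d), t ∈ Set.Ico (0 : ℝ) T →
    ∀ φ : ℝ × Evs d → ℝ, ContDiff ℝ 2 φ →
      IsLocalMax (fun p => uscEnv v p - φ p) (t, x) →
      min (uscEnv v (t, x) - obst t x)
        (-(deriv (fun s => φ (s, x)) t) - Lop d σ φ t x -
          ham t x (uscEnv v (t, x)) (zArg d σ φ t x)) ≤ 0

/-- Viscosity supersolution (via `C^{1,2}` test functions and the lsc envelope). -/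
def IsViscositySupersol (d : ℕ) (T : ℝ) (σ : ℝ → Evs d → (Evs d →L[ℝ] Evs d))
    (obst : ℝ → Evs d → ℝ) (ham : ℝ → Evs d → ℝ → Evs d → ℝ) (g : Evs d → ℝ)
    (v : ℝ × Evs d → ℝ) : Prop :=
  (∀ x, g x ≤ lscEnv v (T, x)) ∧
  ∀ (t : ℝ) (x : Evs d), t ∈ Set.Ico (0 : ℝ) T →
    ∀ φ : ℝ × Evs d → ℝ, ContDiff ℝ 2 φ →
      IsLocalMin (fun p => lscEnv v p - φ p) (t, x) →
      0 ≤ min (lscEnv v (t, x) - obst t x)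
        (-(deriv (fun s => φ (s, x)) t) - Lop d σ φ t x -
          ham t x (lscEnv v (t, x)) (zArg d σ φ t x))

lemma hq (d : ℕ) (y : Evs d) :
    HasFDerivAt (fun z : Evs d => (inner ℝ z z : ℝ)) ((2:ℝ) • (innerSL ℝ y)) y := by
  have h := (hasFDerivAt_id y).inner ℝ (hasFDerivAt_id (𝕜 := ℝ) y)
  refine h.congr_fderiv ?_
  ext z
  simp only [ContinuousLinearMap.smul_apply, innerSL_apply_apply, ContinuousLinearMap.coe_comp',
    Function.comp_apply, ContinuousLinearMap.prod_apply, ContinuousLinearMap.coe_id', id_eq,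
    fderivInnerCLM_apply, smul_eq_mul]
  rw [real_inner_comm z y]; ring

lemma hEta (d γ : ℕ) (y : Evs d) :
    HasFDerivAt (fun z : Evs d => 1 + ‖z‖ ^ (2*γ+2))
      (((2*(γ:ℝ)+2) * ‖y‖ ^ (2*γ)) • innerSL ℝ y) y := by
  have h0 : (fun z : Evs d => 1 + ‖z‖ ^ (2*γ+2)) = fun z => 1 + ((inner ℝ z z : ℝ)) ^ (γ+1) := by
    funext z; rw [real_inner_self_eq_norm_sq, ← pow_mul]; ring_nf
  rw [h0]
  have h1 := HasDerivAt.comp_hasFDerivAt (f := fun z : Evs d => (inner ℝ z z : ℝ)) y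
    (hasDerivAt_pow (γ+1) ((inner ℝ y y : ℝ))) (hq d y)
  have h2 := h1.const_add (1:ℝ)
  refine h2.congr_fderiv ?_
  rw [smul_smul]
  congr 1
  rw [Nat.add_sub_cancel, real_inner_self_eq_norm_sq, ← pow_mul]
  push_cast
  ring

lemma fderiv_ceta (d γ : ℕ) (c : ℝ) (y : Evs d) :
    fderiv ℝ (fun z : Evs d => c * (1 + ‖z‖ ^ (2*γ+2))) y
      = (c * ((2*(γ:ℝ)+2) * ‖y‖ ^ (2*γ))) • innerSL ℝ y := by
  rw [((hEta d γ y).const_mul c).fderiv, smul_smul]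

lemma hDeta (d γ : ℕ) (u x : Evs d) :
    HasFDerivAt (fun y : Evs d => ((inner ℝ y y : ℝ)) ^ γ * (inner ℝ y u : ℝ))
      ((((inner ℝ x x : ℝ)) ^ γ) • (innerSL ℝ u) +
        ((inner ℝ x u : ℝ)) • (((γ:ℝ) * (inner ℝ x x : ℝ) ^ (γ-1)) • ((2:ℝ) • innerSL ℝ x))) x := by
  have hA := HasDerivAt.comp_hasFDerivAt (f := fun z : Evs d => (inner ℝ z z : ℝ)) x
    (hasDerivAt_pow γ ((inner ℝ x x : ℝ))) (hq d x)
  have hB : HasFDerivAt (fun y : Evs d => (inner ℝ y u : ℝ)) (innerSL ℝ u) x := by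
    have h := (hasFDerivAt_id x).inner ℝ (hasFDerivAt_const u x)
    refine h.congr_fderiv ?_
    ext z
    simp [fderivInnerCLM_apply, real_inner_comm, mul_comm]
  exact hA.mul hB

lemma second_deriv_bound (d γ : ℕ) (c : ℝ) (u x : Evs d) :
    |(fderiv ℝ (fun y : Evs d =>
        (fderiv ℝ (fun z : Evs d => c * (1 + ‖z‖ ^ (2*γ+2))) y) u) x) u|
      ≤ |c| * ((2*(γ:ℝ)+2) * (2*(γ:ℝ)+1)) * ‖x‖ ^ (2*γ) * ‖u‖^2 := by
  have e1 : (fun y : Evs d => (fderiv ℝ (fun z : Evs d => c * (1 + ‖z‖ ^ (2*γ+2))) y) u)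
      = fun y => (c * (2*(γ:ℝ)+2)) * ((inner ℝ y y : ℝ) ^ γ * (inner ℝ y u : ℝ)) := by
    funext y
    rw [fderiv_ceta d γ c y]
    simp only [ContinuousLinearMap.smul_apply, innerSL_apply_apply, smul_eq_mul]
    rw [real_inner_self_eq_norm_sq, ← pow_mul]
    ring
  rw [e1, ((hDeta d γ u x).const_mul (c * (2*(γ:ℝ)+2))).fderiv]
  simp only [ContinuousLinearMap.smul_apply, ContinuousLinearMap.add_apply, innerSL_apply_apply,
    smul_eq_mul]
  rw [real_inner_self_eq_norm_sq x, real_inner_self_eq_norm_sq u]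
  have hp : (inner ℝ x u : ℝ)^2 ≤ ‖x‖^2 * ‖u‖^2 := by
    have h := abs_real_inner_le_norm x u
    nlinarith [abs_nonneg (inner ℝ x u : ℝ), sq_abs (inner ℝ x u : ℝ)]
  rw [abs_mul, abs_mul]
  cases γ with
  | zero => simp
  | succ n =>
      push_cast [Nat.add_sub_cancel]
      have key : |(‖x‖^2)^(n+1) * ‖u‖^2 +
          (inner ℝ x u : ℝ) * (((n:ℝ)+1) * (‖x‖^2)^n * (2 * (inner ℝ x u : ℝ)))|
          ≤ (2*((n:ℝ)+1)+1) * ‖x‖^(2*(n+1)) * ‖u‖^2 := by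
        have e : (‖x‖^2)^(n+1) * ‖u‖^2 +
            (inner ℝ x u : ℝ) * (((n:ℝ)+1) * (‖x‖^2)^n * (2 * (inner ℝ x u : ℝ)))
            = (‖x‖^2)^(n+1) * ‖u‖^2 + 2*((n:ℝ)+1) * ((‖x‖^2)^n * (inner ℝ x u : ℝ)^2) := by
          ring
        rw [e, abs_of_nonneg (by positivity),
          show ‖x‖^(2*(n+1)) = (‖x‖^2)^(n+1) from pow_mul _ _ _]
        have hle := mul_le_mul_of_nonneg_left hp
          (show (0:ℝ) ≤ (‖x‖^2)^n by positivity)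
        have hle2 := mul_le_mul_of_nonneg_left hle
          (show (0:ℝ) ≤ 2*((n:ℝ)+1) by positivity)
        have hZ : (‖x‖^2)^n * (‖x‖^2 * ‖u‖^2) = (‖x‖^2)^(n+1) * ‖u‖^2 := by
          rw [pow_succ]; ring
        calc (‖x‖^2)^(n+1) * ‖u‖^2 + 2*((n:ℝ)+1) * ((‖x‖^2)^n * (inner ℝ x u : ℝ)^2)
            ≤ (‖x‖^2)^(n+1) * ‖u‖^2 + 2*((n:ℝ)+1) * ((‖x‖^2)^n * (‖x‖^2 * ‖u‖^2)) := by
              linarith [hle2]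
          _ = (2*((n:ℝ)+1)+1) * (‖x‖^2)^(n+1) * ‖u‖^2 := by rw [hZ]; ring
      refine le_trans (mul_le_mul_of_nonneg_left key (by positivity)) (le_of_eq ?_)
      rw [abs_of_nonneg (show (0:ℝ) ≤ 2*((n:ℝ)+1)+2 by positivity)]
      ring

lemma gradient_ceta (d γ : ℕ) (c : ℝ) (x : Evs d) :
    gradient (fun z : Evs d => c * (1 + ‖z‖ ^ (2*γ+2))) x
      = (c * ((2*(γ:ℝ)+2) * ‖x‖ ^ (2*γ))) • x := by
  apply HasGradientAt.gradient
  rw [hasGradientAt_iff_hasFDerivAt]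
  have h := (hEta d γ x).const_mul c
  refine h.congr_fderiv ?_
  ext z
  simp only [InnerProductSpace.toDual_apply_apply, ContinuousLinearMap.smul_apply, innerSL_apply_apply,
    smul_eq_mul, real_inner_smul_left]
  ring

lemma eta_contDiff (d γ : ℕ) (n : ℕ∞) :
    ContDiff ℝ n (fun z : Evs d => 1 + ‖z‖ ^ (2*γ+2)) := by
  have h0 : (fun z : Evs d => 1 + ‖z‖ ^ (2*γ+2)) = fun z => 1 + ((inner ℝ z z : ℝ)) ^ (γ+1) := by
    funext z; rw [real_inner_self_eq_norm_sq, ← pow_mul]; ring_nf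
  rw [h0]
  exact contDiff_const.add ((contDiff_id.inner ℝ contDiff_id).pow _)

lemma bigF_contDiff (d γ : ℕ) (θ lam : ℝ) (n : ℕ∞) :
    ContDiff ℝ n (fun p : ℝ × Evs d => θ * Real.exp (-lam * p.1) * (1 + ‖p.2‖ ^ (2*γ+2))) := by
  apply ContDiff.mul
  · exact contDiff_const.mul (Real.contDiff_exp.comp (contDiff_const.mul contDiff_fst))
  · exact (eta_contDiff d γ n).comp contDiff_snd

lemma lscEnv_of_cont {d : ℕ} {v : ℝ × Evs d → ℝ} (hvc : Continuous v) (p : ℝ × Evs d) :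
    lscEnv v p = v p :=
  (hvc.tendsto p).liminf_eq

lemma pow_le_one_add_pow {r : ℝ} (hr : 0 ≤ r) {k m : ℕ} (hkm : k ≤ m) :
    r ^ k ≤ 1 + r ^ m := by
  rcases le_total r 1 with h | h
  · have := pow_le_one₀ hr h (n := k)
    nlinarith [pow_nonneg hr m]
  · have := pow_le_pow_right₀ h hkm
    nlinarith

/-- if `v` is a continuous viscosity supersolution of the obstacle problem
`min[v − h, −∂_t v − ℒv − Φ(t,x,∇_x v σ)] = 0`, `v(T,·) ≥ g`, where `Φ` satisfies the
one-sided stochastic Lipschitz condition `Φ(t,x,z) − Φ(t,x,z') ≥ −C(1+‖x‖)‖z−z'‖`, `σ`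
is bounded by `C_σ` and `|v(t,x)| ≤ C_g(1+‖x‖^{2γ})`, then there is `λ₀ > 0` such that
for all `λ ≥ λ₀` and `θ > 0`, `v(t,x) + θe^{−λt}(1+‖x‖^{2γ+2})` is again a viscosity
supersolution of the same problem. -/
theorem stmt_12 (d γ : ℕ) (T C Cσ Cg : ℝ) (hT : 0 < T) (hC : 0 < C) (hCσ : 0 < Cσ)
    (hCg : 0 < Cg)
    (σ : ℝ → Evs d → (Evs d →L[ℝ] Evs d))
    (hσb : ∀ t x, ‖σ t x‖ ≤ Cσ)
    (Φ : ℝ → Evs d → Evs d → ℝ)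
    (hΦ : ∀ t x z z', Φ t x z - Φ t x z' ≥ -(C * (1 + ‖x‖) * ‖z - z'‖))
    (h : ℝ → Evs d → ℝ) (g : Evs d → ℝ)
    (v : ℝ × Evs d → ℝ) (hvc : Continuous v)
    (hvg : ∀ t (x : Evs d), |v (t, x)| ≤ Cg * (1 + ‖x‖ ^ (2 * γ)))
    (hsup : IsViscositySupersol d T σ h (fun t x _ z => Φ t x z) g v) :
    ∃ lam₀ > (0 : ℝ), ∀ lam ≥ lam₀, ∀ θ > (0 : ℝ),
      IsViscositySupersol d T σ h (fun t x _ z => Φ t x z) g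
        (fun p => v p + θ * Real.exp (-lam * p.1) * (1 + ‖p.2‖ ^ (2 * γ + 2))) := by
  classical
  refine ⟨(1/2) * d * Cσ^2 * ((2*(γ:ℝ)+2) * (2*(γ:ℝ)+1)) + 2 * (C * Cσ * (2*(γ:ℝ)+2)) + 1,
    by positivity, ?_⟩
  intro lam hlam θ hθ
  set A : ℝ := (1/2) * d * Cσ^2 * ((2*(γ:ℝ)+2) * (2*(γ:ℝ)+1)) with hAdef
  set B : ℝ := C * Cσ * (2*(γ:ℝ)+2) with hBdef
  have hA0 : 0 ≤ A := by positivity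
  have hB0 : 0 ≤ B := by positivity
  set F : ℝ × Evs d → ℝ := fun p => θ * Real.exp (-lam * p.1) * (1 + ‖p.2‖ ^ (2*γ+2))
    with hFdef
  show IsViscositySupersol d T σ h (fun t x _ z => Φ t x z) g (fun p => v p + F p)
  have hFc : Continuous F := (bigF_contDiff d γ θ lam 0).continuous
  have hwc : Continuous (fun p => v p + F p) := hvc.add hFc
  have hlv : ∀ p, lscEnv v p = v p := lscEnv_of_cont hvc
  have hlw : ∀ p, lscEnv (fun p => v p + F p) p = v p + F p := lscEnv_of_cont hwc
  obtain ⟨hterm, hvisc⟩ := hsup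
  have hFpos : ∀ p : ℝ × Evs d, 0 < F p := by
    intro p
    have h1 : (0:ℝ) ≤ ‖p.2‖ ^ (2*γ+2) := by positivity
    have h2 := Real.exp_pos (-lam * p.1)
    rw [hFdef]
    positivity
  constructor
  · intro x
    rw [hlw]
    have h1 := hterm x
    rw [hlv] at h1
    have h2 := (hFpos (T, x)).le
    linarith
  · intro t x ht φ hφ hmin
    set c : ℝ := θ * Real.exp (-lam * t) with hc
    have hc0 : 0 < c := by positivity
    set ψ : ℝ × Evs d → ℝ := fun p => φ p - F p with hψdef
    have hFsm2 : ContDiff ℝ 2 F := bigF_contDiff d γ θ lam 2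
    have hψ2 : ContDiff ℝ 2 ψ := hφ.sub hFsm2
    have hmin' : IsLocalMin (fun p => lscEnv v p - ψ p) (t, x) := by
      have he : (fun p : ℝ × Evs d => lscEnv (fun q => v q + F q) p - φ p)
          = fun p => lscEnv v p - ψ p := by
        funext p
        rw [hlw p, hlv p, hψdef]
        ring
      rw [← he]
      exact hmin
    have key := hvisc t x ht ψ hψ2 hmin'
    rw [hlv] at key
    rw [hlw]
    rw [le_min_iff] at key ⊢
    obtain ⟨key1, key2⟩ := key
    set K : ℝ := 1 + ‖x‖ ^ (2*γ+2) with hK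
    -- time derivative
    have hdF : HasDerivAt (fun s => F (s, x)) (θ * (Real.exp (-lam * t) * -lam) * K) t := by
      have h1 : HasDerivAt (fun s : ℝ => -lam * s) (-lam) t := by
        simpa using (hasDerivAt_id t).const_mul (-lam)
      exact (h1.exp.const_mul θ).mul_const K
    have hdψ : DifferentiableAt ℝ (fun s => ψ (s, x)) t := by
      have h1 : ContDiff ℝ 2 (fun s : ℝ => ψ (s, x)) :=
        hψ2.comp (contDiff_id.prodMk contDiff_const)
      exact (h1.differentiable two_ne_zero).differentiableAt
    have hsplit : (fun s => φ (s, x)) = fun s => ψ (s, x) + F (s, x) := by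
      funext s; rw [hψdef]; ring
    have hD : deriv (fun s => φ (s, x)) t
        = deriv (fun s => ψ (s, x)) t - lam * (c * K) := by
      rw [hsplit, deriv_fun_add hdψ hdF.differentiableAt, hdF.deriv, hc]
      ring
    -- space slices
    have hψt : ContDiff ℝ 2 (fun y : Evs d => ψ (t, y)) :=
      hψ2.comp (contDiff_const.prodMk contDiff_id)
    have hFt2 : ContDiff ℝ 2 (fun y : Evs d => F (t, y)) :=
      hFsm2.comp (contDiff_const.prodMk contDiff_id)
    have hFteq : (fun y : Evs d => F (t, y)) = fun z => c * (1 + ‖z‖ ^ (2*γ+2)) := rfl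
    -- Lop splitting
    have hLop : Lop d σ φ t x = Lop d σ ψ t x + Lop d σ F t x := by
      unfold Lop
      rw [← mul_add, ← Finset.sum_add_distrib]
      congr 1
      apply Finset.sum_congr rfl
      intro i _
      have e1 : ∀ y : Evs d, fderiv ℝ (fun y' => φ (t, y')) y
          = fderiv ℝ (fun y' => ψ (t, y')) y + fderiv ℝ (fun y' => F (t, y')) y := by
        intro y
        have hsp : (fun y' : Evs d => φ (t, y')) = fun y' => ψ (t, y') + F (t, y') := by
          funext y'; rw [hψdef]; ring
        rw [hsp, fderiv_fun_add ((hψt.differentiable two_ne_zero) y)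
          ((hFt2.differentiable two_ne_zero) y)]
      have e2 : (fun y : Evs d => (fderiv ℝ (fun y' => φ (t, y')) y)
            (σ t x (EuclideanSpace.single i 1)))
          = fun y => (fderiv ℝ (fun y' => ψ (t, y')) y) (σ t x (EuclideanSpace.single i 1))
            + (fderiv ℝ (fun y' => F (t, y')) y) (σ t x (EuclideanSpace.single i 1)) := by
        funext y
        rw [e1 y]
        rfl
      have hd1 : DifferentiableAt ℝ (fun y : Evs d =>
          (fderiv ℝ (fun y' => ψ (t, y')) y) (σ t x (EuclideanSpace.single i 1))) x := by
        have h1 : ContDiff ℝ 1 (fderiv ℝ (fun y' : Evs d => ψ (t, y'))) :=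
          hψt.fderiv_right (by norm_num)
        exact (((ContinuousLinearMap.apply ℝ ℝ
          (σ t x (EuclideanSpace.single i 1))).differentiable).comp
          (h1.differentiable one_ne_zero)).differentiableAt
      have hd2 : DifferentiableAt ℝ (fun y : Evs d =>
          (fderiv ℝ (fun y' => F (t, y')) y) (σ t x (EuclideanSpace.single i 1))) x := by
        have h1 : ContDiff ℝ 1 (fderiv ℝ (fun y' : Evs d => F (t, y'))) :=
          hFt2.fderiv_right (by norm_num)
        exact (((ContinuousLinearMap.apply ℝ ℝ
          (σ t x (EuclideanSpace.single i 1))).differentiable).comp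
          (h1.differentiable one_ne_zero)).differentiableAt
      rw [e2, fderiv_fun_add hd1 hd2]
      rfl
    -- bound on Lop F
    have hσu : ∀ i : Fin d, ‖σ t x (EuclideanSpace.single i 1)‖ ≤ Cσ := by
      intro i
      calc ‖σ t x (EuclideanSpace.single i 1)‖
          ≤ ‖σ t x‖ * ‖EuclideanSpace.single i (1:ℝ)‖ := (σ t x).le_opNorm _
        _ ≤ Cσ := by
            rw [EuclideanSpace.norm_single, norm_one, mul_one]
            exact hσb t x
    have hLopF : Lop d σ F t x ≤ c * (A * ‖x‖ ^ (2*γ)) := by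
      have hterm : ∀ i : Fin d,
          |(fderiv ℝ (fun y => (fderiv ℝ (fun y' => F (t, y')) y)
              (σ t x (EuclideanSpace.single i 1))) x) (σ t x (EuclideanSpace.single i 1))|
            ≤ c * ((2*(γ:ℝ)+2) * (2*(γ:ℝ)+1)) * ‖x‖ ^ (2*γ) * Cσ^2 := by
        intro i
        rw [hFteq]
        refine le_trans (second_deriv_bound d γ c _ x) ?_
        rw [abs_of_nonneg hc0.le]
        gcongr
        exact hσu i
      have hsum : |∑ i : Fin d, (fderiv ℝ (fun y =>
            (fderiv ℝ (fun y' => F (t, y')) y) (σ t x (EuclideanSpace.single i 1))) x)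
            (σ t x (EuclideanSpace.single i 1))|
          ≤ (d : ℝ) * (c * ((2*(γ:ℝ)+2) * (2*(γ:ℝ)+1)) * ‖x‖ ^ (2*γ) * Cσ^2) := by
        refine le_trans (Finset.abs_sum_le_sum_abs _ _) ?_
        calc ∑ i : Fin d, |(fderiv ℝ (fun y => (fderiv ℝ (fun y' => F (t, y')) y)
              (σ t x (EuclideanSpace.single i 1))) x) (σ t x (EuclideanSpace.single i 1))|
            ≤ ∑ _i : Fin d, c * ((2*(γ:ℝ)+2) * (2*(γ:ℝ)+1)) * ‖x‖ ^ (2*γ) * Cσ^2 :=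
              Finset.sum_le_sum (fun i _ => hterm i)
          _ = (d : ℝ) * (c * ((2*(γ:ℝ)+2) * (2*(γ:ℝ)+1)) * ‖x‖ ^ (2*γ) * Cσ^2) := by
              rw [Finset.sum_const, Finset.card_univ, Fintype.card_fin, nsmul_eq_mul]
      have h2 : Lop d σ F t x ≤ (1/2) * ((d : ℝ) *
          (c * ((2*(γ:ℝ)+2) * (2*(γ:ℝ)+1)) * ‖x‖ ^ (2*γ) * Cσ^2)) := by
        unfold Lop
        have := (le_abs_self (∑ i : Fin d, (fderiv ℝ (fun y =>
          (fderiv ℝ (fun y' => F (t, y')) y) (σ t x (EuclideanSpace.single i 1))) x)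
          (σ t x (EuclideanSpace.single i 1)))).trans hsum
        linarith
      refine h2.trans (le_of_eq ?_)
      rw [hAdef]
      ring
    -- gradient splitting
    have hgradsplit : gradient (fun y => φ (t, y)) x = gradient (fun y => ψ (t, y)) x
        + (c * ((2*(γ:ℝ)+2) * ‖x‖ ^ (2*γ))) • x := by
      have hsp : (fun y : Evs d => φ (t, y)) = fun y => ψ (t, y) + F (t, y) := by
        funext y; rw [hψdef]; ring
      have hfd : fderiv ℝ (fun y : Evs d => ψ (t, y) + F (t, y)) x
          = fderiv ℝ (fun y : Evs d => ψ (t, y)) x + fderiv ℝ (fun y : Evs d => F (t, y)) x :=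
        fderiv_fun_add ((hψt.differentiable two_ne_zero) x) ((hFt2.differentiable two_ne_zero) x)
      have hg := gradient_ceta d γ c x
      rw [gradient] at hg
      rw [hsp]
      simp only [gradient]
      rw [hfd, map_add]
      congr 1
    have hzsplit : zArg d σ φ t x = zArg d σ ψ t x
        + (c * ((2*(γ:ℝ)+2) * ‖x‖ ^ (2*γ))) • (ContinuousLinearMap.adjoint (σ t x) x) := by
      unfold zArg
      rw [hgradsplit, map_add, map_smul]
    have hzn : ‖zArg d σ φ t x - zArg d σ ψ t x‖
        ≤ c * ((2*(γ:ℝ)+2) * (Cσ * ‖x‖ ^ (2*γ+1))) := by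
      rw [hzsplit, add_sub_cancel_left, norm_smul]
      have h1 : ‖(ContinuousLinearMap.adjoint (σ t x)) x‖ ≤ Cσ * ‖x‖ := by
        calc ‖(ContinuousLinearMap.adjoint (σ t x)) x‖
            ≤ ‖ContinuousLinearMap.adjoint (σ t x)‖ * ‖x‖ :=
              (ContinuousLinearMap.adjoint (σ t x)).le_opNorm x
          _ ≤ Cσ * ‖x‖ := by
              gcongr
              rw [ContinuousLinearMap.adjoint.norm_map]
              exact hσb t x
      have h2 : |c * ((2*(γ:ℝ)+2) * ‖x‖ ^ (2*γ))| = c * ((2*(γ:ℝ)+2) * ‖x‖ ^ (2*γ)) := by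
        rw [abs_of_nonneg]
        positivity
      rw [Real.norm_eq_abs, h2]
      calc c * ((2*(γ:ℝ)+2) * ‖x‖ ^ (2*γ)) * ‖(ContinuousLinearMap.adjoint (σ t x)) x‖
          ≤ c * ((2*(γ:ℝ)+2) * ‖x‖ ^ (2*γ)) * (Cσ * ‖x‖) := by
            gcongr
        _ = c * ((2*(γ:ℝ)+2) * (Cσ * ‖x‖ ^ (2*γ+1))) := by
            rw [pow_succ]
            ring
    constructor
    · have h2 := (hFpos (t, x)).le
      show 0 ≤ v (t, x) + F (t, x) - h t x
      linarith
    · show (0:ℝ) ≤ -(deriv (fun s => φ (s, x)) t) - Lop d σ φ t x - Φ t x (zArg d σ φ t x)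
      have key2' : (0:ℝ) ≤ -(deriv (fun s => ψ (s, x)) t) - Lop d σ ψ t x
          - Φ t x (zArg d σ ψ t x) := key2
      have hPhi := hΦ t x (zArg d σ ψ t x) (zArg d σ φ t x)
      have hPhiB : Φ t x (zArg d σ φ t x) ≤ Φ t x (zArg d σ ψ t x)
          + C * (1 + ‖x‖) * ‖zArg d σ φ t x - zArg d σ ψ t x‖ := by
        rw [← norm_sub_rev]
        linarith
      have hM2 : C * (1 + ‖x‖) * ‖zArg d σ φ t x - zArg d σ ψ t x‖
          ≤ c * (B * ((1 + ‖x‖) * ‖x‖ ^ (2*γ+1))) := by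
        have h3 := mul_le_mul_of_nonneg_left hzn
          (show (0:ℝ) ≤ C * (1 + ‖x‖) by positivity)
        refine h3.trans (le_of_eq ?_)
        rw [hBdef]
        ring
      -- the key real-analysis inequality
      have hmain : A * ‖x‖ ^ (2*γ) + B * ((1 + ‖x‖) * ‖x‖ ^ (2*γ+1)) ≤ lam * K := by
        have hr0 : (0:ℝ) ≤ ‖x‖ := norm_nonneg x
        have h1 : ‖x‖ ^ (2*γ) ≤ K := pow_le_one_add_pow hr0 (by omega)
        have h2 : ‖x‖ ^ (2*γ+1) ≤ K := pow_le_one_add_pow hr0 (by omega)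
        have h3 : ‖x‖ ^ (2*γ+2) ≤ K := by
          rw [hK]; linarith
        have h4 : (1 + ‖x‖) * ‖x‖ ^ (2*γ+1) = ‖x‖ ^ (2*γ+1) + ‖x‖ ^ (2*γ+2) := by
          rw [pow_succ]
          ring
        have h5 : A + 2*B + 1 ≤ lam := hlam
        have hK1 : (1:ℝ) ≤ K := by
          rw [hK]
          have : (0:ℝ) ≤ ‖x‖ ^ (2*γ+2) := by positivity
          linarith
        have m1 := mul_le_mul_of_nonneg_left h1 hA0
        have m2 := mul_le_mul_of_nonneg_left h2 hB0
        have m3 := mul_le_mul_of_nonneg_left h3 hB0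
        have m4 : 0 ≤ (lam - (A + 2*B + 1)) * K :=
          mul_nonneg (by linarith) (by linarith)
        have e5 : (lam - (A + 2*B + 1)) * K = lam*K - A*K - 2*(B*K) - K := by ring
        rw [h4]
        linarith
      have hmul := mul_le_mul_of_nonneg_left hmain hc0.le
      have hfin : c * (A * ‖x‖ ^ (2*γ)) + c * (B * ((1 + ‖x‖) * ‖x‖ ^ (2*γ+1)))
          ≤ lam * (c * K) := by
        calc c * (A * ‖x‖ ^ (2*γ)) + c * (B * ((1 + ‖x‖) * ‖x‖ ^ (2*γ+1)))
            = c * (A * ‖x‖ ^ (2*γ) + B * ((1 + ‖x‖) * ‖x‖ ^ (2*γ+1))) := by ring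
          _ ≤ c * (lam * K) := hmul
          _ = lam * (c * K) := by ring
      rw [hD, hLop]
      linarith

end
end
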